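/- Let n ≥ 2, ν > 0, and ⟨x⟩ = (1 + |x|²)^{1/2}. Define J_ν(x, ρ) = ∫_{S^{n−1}} ⟨x − ρθ⟩^{−ν} dS(θ). Then there is a constant C depending only on n and ν such that: if ν < n − 1, then J_ν(x, ρ) ≤ C ⟨ρ + |x|⟩^{−ν} for all x ∈ ℝ^n and ρ ≥ 0; and if ν = n − 1, then J_ν(x, ρ) ≤ C ⟨ρ + |x|⟩^{−ν} log(2⟨ρ⟩ + |x|) for all x ∈ ℝ^n and ρ ≥ 0. -/

import Mathlib

open MeasureTheory Metric Set
open scoped ENNReal NNReal Pointwise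

set_option maxHeartbeats 1600000

noncomputable section

/-- The surface measure on the unit sphere of `ℝⁿ`. -/
def sphereMeasure (n : ℕ) : Measure (sphere (0 : EuclideanSpace ℝ (Fin n)) 1) :=
  (volume : Measure (EuclideanSpace ℝ (Fin n))).toSphere

/-- `J_ν(x, ρ) = ∫_{S^{n-1}} ⟨x - ρθ⟩^{-ν} dS(θ)`, where `⟨z⟩ = (1 + |z|²)^{1/2}`. -/
def Jnu (n : ℕ) (ν : ℝ) (x : EuclideanSpace ℝ (Fin n)) (ρ : ℝ) : ℝ :=
  ∫ θ : sphere (0 : EuclideanSpace ℝ (Fin n)) 1,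
    (1 + ‖x - ρ • (θ : EuclideanSpace ℝ (Fin n))‖ ^ 2) ^ (-ν / 2) ∂(sphereMeasure n)

namespace JnuAux


/-- Real constant for the cap bound. -/
def capC (n : ℕ) : ℝ := n * 5 * 2 ^ n * (volume (ball (0 : EuclideanSpace ℝ (Fin n)) 1)).toReal

lemma capC_nonneg (n : ℕ) : 0 ≤ capC n := by
  unfold capC
  positivity

lemma cap_bound {n : ℕ} (hn : 2 ≤ n) (e : EuclideanSpace ℝ (Fin n)) (he : ‖e‖ = 1)
    {d : ℝ} (hd0 : 0 < d) (hd2 : d ≤ 2) :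
    sphereMeasure n {θ : sphere (0 : EuclideanSpace ℝ (Fin n)) 1 |
        ‖(θ : EuclideanSpace ℝ (Fin n)) - e‖ ≤ d}
      ≤ ENNReal.ofReal (capC n * d ^ (n - 1)) := by
  classical
  haveI : Nontrivial (EuclideanSpace ℝ (Fin n)) := by
    refine ⟨e, 0, fun h => ?_⟩
    rw [h, norm_zero] at he
    norm_num at he
  set s : Set (sphere (0 : EuclideanSpace ℝ (Fin n)) 1) :=
    {θ | ‖(θ : EuclideanSpace ℝ (Fin n)) - e‖ ≤ d} with hs_def
  have hs : MeasurableSet s := by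
    have hc : Continuous fun θ : sphere (0 : EuclideanSpace ℝ (Fin n)) 1 =>
        ‖(θ : EuclideanSpace ℝ (Fin n)) - e‖ :=
      (continuous_subtype_val.sub continuous_const).norm
    exact (isClosed_Iic.preimage hc).measurableSet
  set K : ℕ := ⌈1 / d⌉₊ with hK
  have hcover : (Ioo (0:ℝ) 1) • ((↑) '' s) ⊆
      ⋃ k ∈ Finset.range (K + 1), ball (((k : ℝ) * d) • e) (2 * d) := by
    rintro z hz
    rw [Set.mem_smul] at hz
    obtain ⟨r, hr, y, hy, rfl⟩ := hz
    obtain ⟨θ, hθs, rfl⟩ := hy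
    obtain ⟨hr0, hr1⟩ := hr
    have hθnorm : ‖(θ : EuclideanSpace ℝ (Fin n))‖ = 1 := by
      have := θ.2
      rwa [mem_sphere_zero_iff_norm] at this
    set k : ℕ := ⌊r / d⌋₊ with hk
    have hkK : k ∈ Finset.range (K + 1) := by
      have h1 : r / d ≤ 1 / d := by
        have := hr1.le
        gcongr
      have : k ≤ K := by
        calc k = ⌊r / d⌋₊ := rfl
        _ ≤ ⌈r / d⌉₊ := Nat.floor_le_ceil _
        _ ≤ ⌈1 / d⌉₊ := Nat.ceil_le_ceil h1
      simpa [Finset.mem_range] using Nat.lt_succ_of_le this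
    refine Set.mem_biUnion hkK ?_
    rw [mem_ball, dist_eq_norm]
    have h1 : ‖r • (θ : EuclideanSpace ℝ (Fin n)) - ((k : ℝ) * d) • e‖
        ≤ ‖r • ((θ : EuclideanSpace ℝ (Fin n)) - e)‖ + ‖(r - (k : ℝ) * d) • e‖ := by
      have : r • (θ : EuclideanSpace ℝ (Fin n)) - ((k : ℝ) * d) • e
          = r • ((θ : EuclideanSpace ℝ (Fin n)) - e) + (r - (k : ℝ) * d) • e := by
        module
      rw [this]
      exact norm_add_le _ _
    have h2 : ‖r • ((θ : EuclideanSpace ℝ (Fin n)) - e)‖ < d := by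
      rw [norm_smul, Real.norm_eq_abs, abs_of_pos hr0]
      calc r * ‖(θ : EuclideanSpace ℝ (Fin n)) - e‖ ≤ r * d := by
            exact mul_le_mul_of_nonneg_left hθs hr0.le
        _ < 1 * d := by nlinarith
        _ = d := one_mul d
    have h3 : ‖(r - (k : ℝ) * d) • e‖ < d := by
      rw [norm_smul, Real.norm_eq_abs, he, mul_one]
      rw [abs_sub_lt_iff]
      have hfl : (k : ℝ) ≤ r / d := Nat.floor_le (by positivity)
      have hfl2 : r / d < (k : ℝ) + 1 := Nat.lt_floor_add_one _
      constructor
      · nlinarith [(div_lt_iff₀ hd0).mp hfl2]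
      · nlinarith [(le_div_iff₀ hd0).mp hfl]
    linarith [h1, h2, h3]
  have hσ : sphereMeasure n s
      = n * volume ((Ioo (0:ℝ) 1) • ((↑) '' s : Set (EuclideanSpace ℝ (Fin n)))) := by
    rw [sphereMeasure, Measure.toSphere_apply' _ hs, finrank_euclideanSpace_fin]
  have hvol : volume ((Ioo (0:ℝ) 1) • ((↑) '' s : Set (EuclideanSpace ℝ (Fin n))))
      ≤ (K + 1 : ℕ) * (ENNReal.ofReal ((2*d) ^ n) * volume (ball (0:EuclideanSpace ℝ (Fin n)) 1)) := by
    calc volume ((Ioo (0:ℝ) 1) • ((↑) '' s : Set (EuclideanSpace ℝ (Fin n))))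
        ≤ volume (⋃ k ∈ Finset.range (K + 1), ball (((k : ℝ) * d) • e) (2 * d)) :=
          measure_mono hcover
      _ ≤ ∑ k ∈ Finset.range (K + 1), volume (ball (((k : ℝ) * d) • e) (2 * d)) :=
          measure_biUnion_finset_le _ _
      _ = ∑ k ∈ Finset.range (K + 1),
            (ENNReal.ofReal ((2*d) ^ n) * volume (ball (0:EuclideanSpace ℝ (Fin n)) 1)) := by
          refine Finset.sum_congr rfl fun k _ => ?_
          rw [Measure.addHaar_ball volume _ (by positivity)]
          rw [finrank_euclideanSpace_fin]
      _ = (K + 1 : ℕ) * (ENNReal.ofReal ((2*d) ^ n) * volume (ball (0:EuclideanSpace ℝ (Fin n)) 1)) := by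
          rw [Finset.sum_const, Finset.card_range, nsmul_eq_mul]
  have hreal : (n : ℝ) * ((K + 1 : ℕ) * ((2*d) ^ n * (volume (ball (0:EuclideanSpace ℝ (Fin n)) 1)).toReal))
      ≤ capC n * d ^ (n - 1) := by
    have hvb : 0 ≤ (volume (ball (0:EuclideanSpace ℝ (Fin n)) 1)).toReal := ENNReal.toReal_nonneg
    have hK1 : ((K : ℝ) + 1) ≤ 1 / d + 2 := by
      have := Nat.ceil_lt_add_one (a := 1 / d) (by positivity)
      rw [← hK] at this
      linarith
    have hdn : (2*d) ^ n = 2 ^ n * (d * d ^ (n - 1)) := by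
      rw [mul_pow]
      congr 1
      conv_lhs => rw [show n = 1 + (n - 1) by omega]
      rw [pow_add, pow_one]
    have h5 : ((K : ℝ) + 1) * (2*d)^n ≤ 5 * 2 ^ n * d ^ (n-1) := by
      rw [hdn]
      have h1 : ((K : ℝ) + 1) * (2 ^ n * (d * d ^ (n - 1)))
          ≤ (1/d + 2) * (2 ^ n * (d * d ^ (n - 1))) := by
        apply mul_le_mul_of_nonneg_right hK1
        positivity
      have h2 : (1/d + 2) * (2 ^ n * (d * d ^ (n - 1)))
          = 2 ^ n * d ^ (n-1) * (1 + 2 * d) := by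
        field_simp
      have h3 : (2:ℝ) ^ n * d ^ (n-1) * (1 + 2 * d) ≤ 2 ^ n * d ^ (n-1) * 5 := by
        apply mul_le_mul_of_nonneg_left (by linarith) (by positivity)
      calc ((K : ℝ) + 1) * (2 ^ n * (d * d ^ (n - 1))) ≤ _ := h1
        _ = _ := h2
        _ ≤ 2 ^ n * d ^ (n-1) * 5 := h3
        _ = 5 * 2 ^ n * d ^ (n-1) := by ring
    calc (n : ℝ) * ((K + 1 : ℕ) * ((2*d) ^ n * (volume (ball (0:EuclideanSpace ℝ (Fin n)) 1)).toReal))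
        = (n : ℝ) * (((K:ℝ) + 1) * (2*d)^n) * (volume (ball (0:EuclideanSpace ℝ (Fin n)) 1)).toReal := by
          push_cast
          ring
      _ ≤ (n : ℝ) * (5 * 2 ^ n * d ^ (n-1)) * (volume (ball (0:EuclideanSpace ℝ (Fin n)) 1)).toReal := by
          apply mul_le_mul_of_nonneg_right _ hvb
          exact mul_le_mul_of_nonneg_left h5 (by positivity)
      _ = capC n * d ^ (n - 1) := by
          unfold capC
          ring
  calc sphereMeasure n s = n * volume ((Ioo (0:ℝ) 1) • ((↑) '' s : Set (EuclideanSpace ℝ (Fin n)))) := hσ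
    _ ≤ n * ((K + 1 : ℕ) * (ENNReal.ofReal ((2*d) ^ n) * volume (ball (0:EuclideanSpace ℝ (Fin n)) 1))) :=
        mul_le_mul_right hvol _
    _ = ENNReal.ofReal ((n : ℝ) * ((K + 1 : ℕ) * ((2*d) ^ n * (volume (ball (0:EuclideanSpace ℝ (Fin n)) 1)).toReal))) := by
        rw [ENNReal.ofReal_mul (by positivity), ENNReal.ofReal_mul (by positivity),
          ENNReal.ofReal_mul (by positivity), ENNReal.ofReal_natCast, ENNReal.ofReal_natCast,
          ENNReal.ofReal_toReal measure_ball_lt_top.ne]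
    _ ≤ ENNReal.ofReal (capC n * d ^ (n - 1)) := ENNReal.ofReal_le_ofReal hreal


/-- dyadic terms -/

def tk (n : ℕ) (ν A B : ℝ) (k : ℕ) : ℝ :=
  capC n * (2 * (1/2 : ℝ) ^ k) ^ (n - 1) * (A + B * ((1/2 : ℝ) ^ k) ^ 2) ^ (-ν / 2)

lemma tk_nonneg (n : ℕ) (ν A B : ℝ) (hA : 1 ≤ A) (hB : 0 ≤ B) (k : ℕ) :
    0 ≤ tk n ν A B k := by
  unfold tk
  have h1 : (0:ℝ) < A + B * ((1/2 : ℝ) ^ k) ^ 2 := by positivity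
  have := capC_nonneg n
  positivity

lemma tk_le (n : ℕ) (hn : 2 ≤ n) (ν A B : ℝ) (hν : 0 < ν) (hA : 1 ≤ A) (hB : 0 ≤ B) (k : ℕ) :
    tk n ν A B k ≤ (capC n * 2 ^ (n-1)) * (1/2 : ℝ) ^ k := by
  unfold tk
  have hbase : (1:ℝ) ≤ A + B * ((1/2 : ℝ) ^ k) ^ 2 := by
    have : (0:ℝ) ≤ B * ((1/2 : ℝ) ^ k) ^ 2 := by positivity
    linarith
  have hrpow : (A + B * ((1/2 : ℝ) ^ k) ^ 2) ^ (-ν / 2) ≤ 1 :=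
    Real.rpow_le_one_of_one_le_of_nonpos hbase (by linarith [hν.le] ; )
  have hpow : (2 * (1/2 : ℝ) ^ k) ^ (n - 1) ≤ 2 ^ (n-1) * (1/2 : ℝ) ^ k := by
    rw [mul_pow]
    apply mul_le_mul_of_nonneg_left _ (by positivity)
    calc ((1/2 : ℝ) ^ k) ^ (n-1) ≤ ((1/2 : ℝ) ^ k) ^ 1 := by
          apply pow_le_pow_of_le_one (by positivity) (by norm_num [pow_le_one₀]) (by omega)
      _ = (1/2 : ℝ) ^ k := pow_one _
  calc capC n * (2 * (1/2 : ℝ) ^ k) ^ (n - 1) * (A + B * ((1/2 : ℝ) ^ k) ^ 2) ^ (-ν / 2)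
      ≤ capC n * (2 * (1/2 : ℝ) ^ k) ^ (n - 1) * 1 := by
        apply mul_le_mul_of_nonneg_left hrpow
        have := capC_nonneg n
        positivity
    _ = capC n * (2 * (1/2 : ℝ) ^ k) ^ (n - 1) := mul_one _
    _ ≤ capC n * (2 ^ (n-1) * (1/2 : ℝ) ^ k) :=
        mul_le_mul_of_nonneg_left hpow (capC_nonneg n)
    _ = (capC n * 2 ^ (n-1)) * (1/2 : ℝ) ^ k := by ring

lemma summable_tk (n : ℕ) (hn : 2 ≤ n) (ν A B : ℝ) (hν : 0 < ν) (hA : 1 ≤ A) (hB : 0 ≤ B) :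
    Summable (tk n ν A B) := by
  apply Summable.of_nonneg_of_le (tk_nonneg n ν A B hA hB) (tk_le n hn ν A B hν hA hB)
  exact (summable_geometric_of_lt_one (by norm_num) (by norm_num)).mul_left _

lemma integral_le_tsum (n : ℕ) (hn : 2 ≤ n) (ν : ℝ) (hν : 0 < ν)
    (e : EuclideanSpace ℝ (Fin n)) (he : ‖e‖ = 1) (A B : ℝ) (hA : 1 ≤ A) (hB : 0 ≤ B) :
    (∫ θ : sphere (0 : EuclideanSpace ℝ (Fin n)) 1,
        (A + B * ‖(θ : EuclideanSpace ℝ (Fin n)) - e‖ ^ 2) ^ (-ν / 2) ∂(sphereMeasure n))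
      ≤ ∑' k : ℕ, tk n ν A B k := by
  classical
  set f : sphere (0 : EuclideanSpace ℝ (Fin n)) 1 → ℝ :=
    fun θ => (A + B * ‖(θ : EuclideanSpace ℝ (Fin n)) - e‖ ^ 2) ^ (-ν / 2) with hf_def
  have hbase : ∀ θ : sphere (0 : EuclideanSpace ℝ (Fin n)) 1,
      (1:ℝ) ≤ A + B * ‖(θ : EuclideanSpace ℝ (Fin n)) - e‖ ^ 2 := by
    intro θ
    have : (0:ℝ) ≤ B * ‖(θ : EuclideanSpace ℝ (Fin n)) - e‖ ^ 2 := by positivity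
    linarith
  have hf_nonneg : ∀ θ, 0 ≤ f θ := fun θ =>
    Real.rpow_nonneg (by linarith [hbase θ]) _
  have hf_cont : Continuous f := by
    apply Continuous.rpow_const
    · exact continuous_const.add (continuous_const.mul
        (((continuous_subtype_val.sub continuous_const).norm).pow 2))
    · intro θ
      exact Or.inl (by linarith [hbase θ])
  -- rings
  set R : ℕ → Set (sphere (0 : EuclideanSpace ℝ (Fin n)) 1) :=
    fun k => {θ | (1/2:ℝ)^k < ‖(θ : EuclideanSpace ℝ (Fin n)) - e‖ ∧
      ‖(θ : EuclideanSpace ℝ (Fin n)) - e‖ ≤ 2 * (1/2:ℝ)^k} with hR_def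
  set P : Set (sphere (0 : EuclideanSpace ℝ (Fin n)) 1) :=
    {θ | (θ : EuclideanSpace ℝ (Fin n)) = e} with hP_def
  have hcover : (univ : Set (sphere (0 : EuclideanSpace ℝ (Fin n)) 1)) ⊆ P ∪ ⋃ k, R k := by
    intro θ _
    by_cases hθe : (θ : EuclideanSpace ℝ (Fin n)) = e
    · exact Or.inl hθe
    · right
      set t := ‖(θ : EuclideanSpace ℝ (Fin n)) - e‖ with ht_def
      have ht0 : 0 < t := by
        rw [ht_def, norm_pos_iff, sub_ne_zero]
        exact hθe
      have ht2 : t ≤ 2 := by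
        have hθn : ‖(θ : EuclideanSpace ℝ (Fin n))‖ = 1 :=
          mem_sphere_zero_iff_norm.mp θ.2
        calc t ≤ ‖(θ : EuclideanSpace ℝ (Fin n))‖ + ‖e‖ := norm_sub_le _ _
          _ = 2 := by rw [hθn, he]; norm_num
      have hex : ∃ k : ℕ, (1/2:ℝ)^k < t := by
        obtain ⟨k, hk⟩ := exists_pow_lt_of_lt_one ht0 (by norm_num : (1/2:ℝ) < 1)
        exact ⟨k, hk⟩
      set k := Nat.find hex with hk_def
      have hk1 : (1/2:ℝ)^k < t := Nat.find_spec hex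
      have hk2 : t ≤ 2 * (1/2:ℝ)^k := by
        rcases Nat.eq_zero_or_pos k with h0 | hpos
        · rw [h0]; simpa using ht2
        · have hnot : ¬ ((1/2:ℝ)^(k-1) < t) := Nat.find_min hex (by omega)
          push_neg at hnot
          have heq : (1/2:ℝ)^(k-1) = 2 * (1/2:ℝ)^k := by
            conv_rhs => rw [show k = (k-1)+1 by omega]
            rw [pow_succ]
            ring
          linarith [hnot, heq.le]
      exact mem_iUnion.mpr ⟨k, hk1, hk2⟩
  have hP_null : sphereMeasure n P = 0 := by
    have hPsub : ∀ m : ℕ, P ⊆ {θ : sphere (0 : EuclideanSpace ℝ (Fin n)) 1 |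
        ‖(θ : EuclideanSpace ℝ (Fin n)) - e‖ ≤ 2 * (1/2:ℝ)^m} := by
      intro m θ hθ
      simp only [hP_def, mem_setOf_eq] at hθ
      simp only [mem_setOf_eq, hθ, sub_self, norm_zero]
      positivity
    have hle : ∀ m : ℕ, sphereMeasure n P
        ≤ ENNReal.ofReal (capC n * (2 * (1/2:ℝ)^m) ^ (n-1)) := by
      intro m
      refine (measure_mono (hPsub m)).trans ?_
      exact cap_bound hn e he (by positivity) (by
        have : (1/2:ℝ)^m ≤ 1 := pow_le_one₀ (by norm_num) (by norm_num)
        linarith)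
    have htend : Filter.Tendsto
        (fun m : ℕ => ENNReal.ofReal (capC n * (2 * (1/2:ℝ)^m) ^ (n-1)))
        Filter.atTop (nhds 0) := by
      have h1 : Filter.Tendsto (fun m : ℕ => (2 * (1/2:ℝ)^m)) Filter.atTop (nhds 0) := by
        have := tendsto_pow_atTop_nhds_zero_of_lt_one (by norm_num : (0:ℝ) ≤ 1/2)
          (by norm_num : (1/2:ℝ) < 1)
        simpa using this.const_mul 2
      have h2 : Filter.Tendsto (fun m : ℕ => capC n * (2 * (1/2:ℝ)^m) ^ (n-1))
          Filter.atTop (nhds 0) := by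
        have := (h1.pow (n-1)).const_mul (capC n)
        simpa [zero_pow (show n - 1 ≠ 0 by omega)] using this
      have := (ENNReal.continuous_ofReal.tendsto 0).comp h2
      simpa [Function.comp_def] using this
    exact le_antisymm (ge_of_tendsto' htend hle) zero_le
  -- main chain
  have key : ∫ θ, f θ ∂(sphereMeasure n)
      = (∫⁻ θ, ENNReal.ofReal (f θ) ∂(sphereMeasure n)).toReal :=
    integral_eq_lintegral_of_nonneg_ae (Filter.Eventually.of_forall hf_nonneg)
      hf_cont.aestronglyMeasurable
  have hlint : ∫⁻ θ, ENNReal.ofReal (f θ) ∂(sphereMeasure n)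
      ≤ ENNReal.ofReal (∑' k : ℕ, tk n ν A B k) := by
    have step1 : ∫⁻ θ, ENNReal.ofReal (f θ) ∂(sphereMeasure n)
        ≤ ∫⁻ θ in P, ENNReal.ofReal (f θ) ∂(sphereMeasure n)
          + ∑' k, ∫⁻ θ in R k, ENNReal.ofReal (f θ) ∂(sphereMeasure n) := by
      calc ∫⁻ θ, ENNReal.ofReal (f θ) ∂(sphereMeasure n)
          = ∫⁻ θ in univ, ENNReal.ofReal (f θ) ∂(sphereMeasure n) := by
            rw [Measure.restrict_univ]
        _ ≤ ∫⁻ θ in P ∪ ⋃ k, R k, ENNReal.ofReal (f θ) ∂(sphereMeasure n) :=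
            lintegral_mono_set hcover
        _ ≤ ∫⁻ θ in P, ENNReal.ofReal (f θ) ∂(sphereMeasure n)
            + ∫⁻ θ in ⋃ k, R k, ENNReal.ofReal (f θ) ∂(sphereMeasure n) :=
            lintegral_union_le _ _ _
        _ ≤ _ := by
            gcongr
            exact lintegral_iUnion_le _ _
    have hPint : ∫⁻ θ in P, ENNReal.ofReal (f θ) ∂(sphereMeasure n) = 0 := by
      rw [setLIntegral_measure_zero _ _ hP_null]
    have hRint : ∀ k, ∫⁻ θ in R k, ENNReal.ofReal (f θ) ∂(sphereMeasure n)
        ≤ ENNReal.ofReal (tk n ν A B k) := by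
      intro k
      have hstep : ∫⁻ θ in R k, ENNReal.ofReal (f θ) ∂(sphereMeasure n)
          ≤ ∫⁻ _θ in R k,
              ENNReal.ofReal ((A + B * ((1/2:ℝ)^k) ^ 2) ^ (-ν / 2)) ∂(sphereMeasure n) := by
        apply setLIntegral_mono measurable_const
        intro θ hθ
        apply ENNReal.ofReal_le_ofReal
        apply Real.rpow_le_rpow_of_nonpos (by positivity)
        · have h1 : ((1/2:ℝ)^k) ^ 2 ≤ ‖(θ : EuclideanSpace ℝ (Fin n)) - e‖ ^ 2 := by
            apply pow_le_pow_left₀ (by positivity) hθ.1.le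
          nlinarith [hB, h1]
        · linarith [hν.le]
      rw [setLIntegral_const] at hstep
      refine hstep.trans ?_
      have hmeas : sphereMeasure n (R k)
          ≤ ENNReal.ofReal (capC n * (2 * (1/2:ℝ)^k) ^ (n-1)) := by
        refine (measure_mono ?_).trans (cap_bound hn e he (d := 2 * (1/2:ℝ)^k)
          (by positivity) (by
            have : (1/2:ℝ)^k ≤ 1 := pow_le_one₀ (by norm_num) (by norm_num)
            linarith))
        intro θ hθ
        exact hθ.2
      calc ENNReal.ofReal ((A + B * ((1/2:ℝ)^k) ^ 2) ^ (-ν / 2)) * sphereMeasure n (R k)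
          ≤ ENNReal.ofReal ((A + B * ((1/2:ℝ)^k) ^ 2) ^ (-ν / 2))
            * ENNReal.ofReal (capC n * (2 * (1/2:ℝ)^k) ^ (n-1)) := by
            gcongr
        _ = ENNReal.ofReal (tk n ν A B k) := by
            rw [← ENNReal.ofReal_mul (by positivity)]
            unfold tk
            ring_nf
    calc ∫⁻ θ, ENNReal.ofReal (f θ) ∂(sphereMeasure n)
        ≤ ∫⁻ θ in P, ENNReal.ofReal (f θ) ∂(sphereMeasure n)
          + ∑' k, ∫⁻ θ in R k, ENNReal.ofReal (f θ) ∂(sphereMeasure n) := step1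
      _ = ∑' k, ∫⁻ θ in R k, ENNReal.ofReal (f θ) ∂(sphereMeasure n) := by
          rw [hPint, zero_add]
      _ ≤ ∑' k, ENNReal.ofReal (tk n ν A B k) := ENNReal.tsum_le_tsum hRint
      _ = ENNReal.ofReal (∑' k, tk n ν A B k) :=
          (ENNReal.ofReal_tsum_of_nonneg (tk_nonneg n ν A B hA hB)
            (summable_tk n hn ν A B hν hA hB)).symm
  rw [key]
  calc (∫⁻ θ, ENNReal.ofReal (f θ) ∂(sphereMeasure n)).toReal
      ≤ (ENNReal.ofReal (∑' k : ℕ, tk n ν A B k)).toReal :=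
        ENNReal.toReal_mono ENNReal.ofReal_ne_top hlint
    _ = ∑' k : ℕ, tk n ν A B k :=
        ENNReal.toReal_ofReal (tsum_nonneg (tk_nonneg n ν A B hA hB))




variable (c₀ : ℝ)

def tk' (c₀ : ℝ) (n : ℕ) (ν A B : ℝ) (k : ℕ) : ℝ :=
  c₀ * ((1/2 : ℝ) ^ (n-1)) ^ k * (A + B * ((1/2 : ℝ) ^ k) ^ 2) ^ (-ν / 2)

lemma c_le (ν : ℝ) (hν : 0 < ν) {A B : ℝ} (hA : 1 ≤ A) (hB : 0 ≤ B) (k : ℕ) :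
    (A + B * ((1/2:ℝ) ^ k) ^ 2) ^ (-ν / 2) ≤ ((2:ℝ) ^ ν) ^ k * (A + B) ^ (-ν / 2) := by
  set w : ℝ := (1/2:ℝ) ^ k with hw_def
  have hw0 : 0 < w := by positivity
  have hw1 : w ≤ 1 := pow_le_one₀ (by norm_num) (by norm_num)
  have hAB0 : (0:ℝ) < A + B := by linarith
  have hw2 : w ^ 2 ≤ 1 := by nlinarith
  have hAw : A * w ^ 2 ≤ A := by nlinarith
  have h1 : w ^ 2 * (A + B) ≤ A + B * w ^ 2 := by nlinarith
  have h2 : (A + B * w ^ 2) ^ (-ν / 2) ≤ (w ^ 2 * (A + B)) ^ (-ν / 2) :=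
    Real.rpow_le_rpow_of_nonpos (by positivity) h1 (by linarith)
  have h3 : (w ^ 2 * (A + B)) ^ (-ν / 2) = (w ^ 2) ^ (-ν / 2) * (A + B) ^ (-ν / 2) :=
    Real.mul_rpow (by positivity) hAB0.le
  have h4 : (w ^ 2) ^ (-ν / 2) = ((2:ℝ) ^ ν) ^ k := by
    have e1 : w ^ 2 = ((1/4:ℝ)) ^ k := by
      rw [hw_def, ← pow_mul, show (1/4:ℝ) = (1/2:ℝ)^2 by norm_num, ← pow_mul, Nat.mul_comm]
    have e2 : (1/4:ℝ) = (2:ℝ) ^ (-2:ℝ) := by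
      rw [show (-2:ℝ) = ((-2 : ℤ) : ℝ) by norm_num, Real.rpow_intCast]
      norm_num
    rw [e1, e2, ← Real.rpow_natCast ((2:ℝ) ^ (-2:ℝ)) k, ← Real.rpow_mul (by positivity),
      ← Real.rpow_mul (by norm_num), ← Real.rpow_natCast ((2:ℝ) ^ ν) k,
      ← Real.rpow_mul (by norm_num)]
    congr 1
    ring
  calc (A + B * w ^ 2) ^ (-ν / 2) ≤ (w ^ 2 * (A + B)) ^ (-ν / 2) := h2
    _ = (w ^ 2) ^ (-ν / 2) * (A + B) ^ (-ν / 2) := h3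
    _ = ((2:ℝ) ^ ν) ^ k * (A + B) ^ (-ν / 2) := by rw [h4]

lemma sum_lt (hc : 0 ≤ c₀) (n : ℕ) (hn : 2 ≤ n) (ν : ℝ) (hν : 0 < ν)
    (hlt : ν < (n:ℝ) - 1)
    (hsummable : ∀ A B : ℝ, 1 ≤ A → 0 ≤ B → Summable (tk' c₀ n ν A B)) :
    ∃ C : ℝ, 0 ≤ C ∧ ∀ A B : ℝ, 1 ≤ A → 0 ≤ B →
      ∑' k, tk' c₀ n ν A B k ≤ C * (A + B) ^ (-ν / 2) := by
  set q : ℝ := (1/2:ℝ) ^ (n-1) * (2:ℝ) ^ ν with hq_def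
  have hq0 : 0 ≤ q := by positivity
  have hq1 : q < 1 := by
    have hcast : ((n - 1 : ℕ) : ℝ) = (n:ℝ) - 1 := by
      have : (1:ℕ) ≤ n := by omega
      push_cast [Nat.cast_sub this]
      ring
    have e1 : (1/2:ℝ) ^ (n-1) = (2:ℝ) ^ (-((n:ℝ) - 1)) := by
      rw [one_div, inv_pow, ← Real.rpow_natCast (2:ℝ) (n-1), ← Real.rpow_neg (by norm_num),
        hcast]
    have e2 : q = (2:ℝ) ^ (ν - ((n:ℝ) - 1)) := by
      rw [hq_def, e1, ← Real.rpow_add (by norm_num)]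
      congr 1
      ring
    rw [e2]
    exact Real.rpow_lt_one_of_one_lt_of_neg (by norm_num) (by linarith)
  refine ⟨c₀ * (1 - q)⁻¹, mul_nonneg hc (inv_nonneg.mpr (by linarith)), fun A B hA hB => ?_⟩
  have hv0 : 0 ≤ (A + B) ^ (-ν / 2) := Real.rpow_nonneg (by linarith) _
  have hterm : ∀ k, tk' c₀ n ν A B k ≤ (c₀ * (A + B) ^ (-ν / 2)) * q ^ k := by
    intro k
    unfold tk'
    have h1 := c_le ν hν hA hB k
    calc c₀ * ((1/2 : ℝ) ^ (n-1)) ^ k * (A + B * ((1/2 : ℝ) ^ k) ^ 2) ^ (-ν / 2)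
        ≤ c₀ * ((1/2 : ℝ) ^ (n-1)) ^ k * (((2:ℝ) ^ ν) ^ k * (A + B) ^ (-ν / 2)) := by
          apply mul_le_mul_of_nonneg_left h1 (by positivity)
      _ = (c₀ * (A + B) ^ (-ν / 2)) * q ^ k := by
          rw [hq_def, mul_pow]
          ring
  calc ∑' k, tk' c₀ n ν A B k
      ≤ ∑' k, (c₀ * (A + B) ^ (-ν / 2)) * q ^ k := by
        apply Summable.tsum_le_tsum hterm (hsummable A B hA hB)
        exact (summable_geometric_of_lt_one hq0 hq1).mul_left _
    _ = (c₀ * (A + B) ^ (-ν / 2)) * (1 - q)⁻¹ := by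
        rw [tsum_mul_left, tsum_geometric_of_lt_one hq0 hq1]
    _ = (c₀ * (1 - q)⁻¹) * (A + B) ^ (-ν / 2) := by ring

lemma sum_eq (hc : 0 ≤ c₀) (n : ℕ) (hn : 2 ≤ n) (ν : ℝ) (hν : 0 < ν)
    (heq : ν = (n:ℝ) - 1)
    (hsummable : ∀ A B : ℝ, 1 ≤ A → 0 ≤ B → Summable (tk' c₀ n ν A B)) :
    ∃ C : ℝ, 0 ≤ C ∧ ∀ A B : ℝ, 1 ≤ A → 0 ≤ B →
      ∑' k, tk' c₀ n ν A B k ≤ C * ((A + B) ^ (-ν / 2) * (1 + Real.log (A + B))) := by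
  set Q : ℝ := (1/2:ℝ) ^ (n-1) with hQ_def
  have hQ0 : 0 < Q := by positivity
  have hQhalf : Q ≤ 1/2 := by
    rw [hQ_def]
    calc (1/2:ℝ) ^ (n-1) ≤ (1/2:ℝ) ^ 1 :=
          pow_le_pow_of_le_one (by norm_num) (by norm_num) (by omega)
      _ = 1/2 := pow_one _
  have hQ1 : Q < 1 := by linarith
  have h1Qnn : (0:ℝ) ≤ (1 - Q)⁻¹ := inv_nonneg.mpr (by linarith)
  refine ⟨c₀ * (1 + (1 - Q)⁻¹), mul_nonneg hc (by linarith), fun A B hA hB => ?_⟩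
  have hAB0 : (0:ℝ) < A + B := by linarith
  have hAB1 : (1:ℝ) ≤ A + B := by linarith
  have hv0 : 0 ≤ (A + B) ^ (-ν / 2) := Real.rpow_nonneg hAB0.le _
  have hlog0 : 0 ≤ Real.log (A + B) := Real.log_nonneg hAB1
  set v : ℝ := (A + B) ^ (-ν / 2) with hv_def
  set K : ℕ := ⌈Real.logb 4 (A + B)⌉₊ with hK_def
  -- K bounds
  have hlogb : Real.logb 4 (A + B) ≤ Real.log (A + B) := by
    rw [Real.logb, div_le_iff₀ (by positivity : (0:ℝ) < Real.log 4)]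
    have h4 : (1:ℝ) ≤ Real.log 4 := by
      have h2 : Real.log 4 = 2 * Real.log 2 := by
        rw [show (4:ℝ) = 2^2 by norm_num, Real.log_pow]
        push_cast
        ring
      have := Real.log_two_gt_d9
      rw [h2]
      linarith
    nlinarith
  have hKle : (K:ℝ) ≤ Real.log (A + B) + 1 := by
    have h0 : 0 ≤ Real.logb 4 (A + B) := Real.logb_nonneg (by norm_num) hAB1
    have := Nat.ceil_lt_add_one h0
    rw [← hK_def] at this
    linarith
  have h4K : A + B ≤ (4:ℝ) ^ (K:ℕ) := by
    have h1 : Real.logb 4 (A+B) ≤ (K:ℝ) := Nat.le_ceil _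
    calc A + B = (4:ℝ) ^ (Real.logb 4 (A+B)) := (Real.rpow_logb (by norm_num) (by norm_num) hAB0).symm
      _ ≤ (4:ℝ) ^ ((K:ℕ):ℝ) := Real.rpow_le_rpow_of_exponent_le (by norm_num) h1
      _ = (4:ℝ) ^ (K:ℕ) := Real.rpow_natCast _ _
  -- bound 1 : all terms ≤ c₀ * v
  have hterm1 : ∀ k, tk' c₀ n ν A B k ≤ c₀ * v := by
    intro k
    unfold tk'
    have h1 := c_le ν hν hA hB k
    have e1 : ((1/2 : ℝ) ^ (n-1)) ^ k * ((2:ℝ) ^ ν) ^ k = 1 := by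
      rw [← mul_pow]
      have : (1/2:ℝ) ^ (n-1) * (2:ℝ) ^ ν = 1 := by
        rw [heq]
        have hcast : ((n - 1 : ℕ) : ℝ) = (n:ℝ) - 1 := by
          have : (1:ℕ) ≤ n := by omega
          push_cast [Nat.cast_sub this]
          ring
        rw [one_div, inv_pow, ← Real.rpow_natCast (2:ℝ) (n-1), hcast]
        rw [← Real.rpow_neg (by norm_num), ← Real.rpow_add (by norm_num)]
        simp
      rw [this, one_pow]
    calc c₀ * ((1/2 : ℝ) ^ (n-1)) ^ k * (A + B * ((1/2 : ℝ) ^ k) ^ 2) ^ (-ν / 2)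
        ≤ c₀ * ((1/2 : ℝ) ^ (n-1)) ^ k * (((2:ℝ) ^ ν) ^ k * v) := by
          apply mul_le_mul_of_nonneg_left h1 (by positivity)
      _ = c₀ * (((1/2 : ℝ) ^ (n-1)) ^ k * ((2:ℝ) ^ ν) ^ k) * v := by ring
      _ = c₀ * v := by rw [e1]; ring
  -- bound 2 : terms ≤ c₀ * Q^k  (since A + B w² ≥ A ≥ 1)
  have hterm2 : ∀ k, tk' c₀ n ν A B k ≤ c₀ * Q ^ k := by
    intro k
    unfold tk'
    have hb : (1:ℝ) ≤ A + B * ((1/2 : ℝ) ^ k) ^ 2 := by nlinarith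
    have h1 : (A + B * ((1/2 : ℝ) ^ k) ^ 2) ^ (-ν / 2) ≤ 1 :=
      Real.rpow_le_one_of_one_le_of_nonpos hb (by linarith)
    calc c₀ * ((1/2 : ℝ) ^ (n-1)) ^ k * (A + B * ((1/2 : ℝ) ^ k) ^ 2) ^ (-ν / 2)
        ≤ c₀ * ((1/2 : ℝ) ^ (n-1)) ^ k * 1 := by
          apply mul_le_mul_of_nonneg_left h1 (by positivity)
      _ = c₀ * Q ^ k := by rw [mul_one, hQ_def]
  -- key : Q ^ K ≤ v
  have hQKv : Q ^ K ≤ v := by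
    set u : ℝ := (1/2:ℝ) ^ K with hu_def
    have hu0 : 0 < u := by positivity
    have hQK : Q ^ K = u ^ (n-1) := by
      rw [hQ_def, hu_def, ← pow_mul, ← pow_mul, Nat.mul_comm]
    have huAB : A + B ≤ (u^2)⁻¹ := by
      have : u^2 = ((4:ℝ) ^ K)⁻¹ := by
        rw [hu_def, ← pow_mul, Nat.mul_comm, pow_mul,
          show ((1:ℝ)/2)^2 = (4:ℝ)⁻¹ by norm_num, inv_pow]
      rw [this, inv_inv]
      exact h4K
    have h1 : v ≥ ((u^2)⁻¹) ^ (-ν/2) :=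
      Real.rpow_le_rpow_of_nonpos (by positivity) huAB (by linarith)
    have h2 : ((u^2)⁻¹) ^ (-ν/2) = u ^ (n-1) := by
      rw [← Real.rpow_neg_one (u^2), ← Real.rpow_natCast u 2,
        ← Real.rpow_mul hu0.le, ← Real.rpow_mul (by positivity)]
      rw [show ((2:ℕ):ℝ) * (-1) * (-ν/2) = ν by push_cast; ring]
      rw [heq]
      have hcast : ((n - 1 : ℕ) : ℝ) = (n:ℝ) - 1 := by
        have : (1:ℕ) ≤ n := by omega
        push_cast [Nat.cast_sub this]
        ring
      rw [← hcast, Real.rpow_natCast]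
    rw [hQK, ← h2]
    exact h1
  -- assemble
  have hsum := hsummable A B hA hB
  have hsplit := Summable.sum_add_tsum_nat_add K hsum
  have hpart : ∑ i ∈ Finset.range K, tk' c₀ n ν A B i ≤ (K:ℝ) * (c₀ * v) := by
    calc ∑ i ∈ Finset.range K, tk' c₀ n ν A B i
        ≤ ∑ _i ∈ Finset.range K, (c₀ * v) := Finset.sum_le_sum (fun i _ => hterm1 i)
      _ = (K:ℝ) * (c₀ * v) := by
          rw [Finset.sum_const, Finset.card_range, nsmul_eq_mul]
  have htail : ∑' i : ℕ, tk' c₀ n ν A B (i + K) ≤ c₀ * Q ^ K * (1 - Q)⁻¹ := by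
    calc ∑' i : ℕ, tk' c₀ n ν A B (i + K)
        ≤ ∑' i : ℕ, c₀ * Q ^ (i + K) := by
          apply Summable.tsum_le_tsum (fun i => hterm2 (i + K))
            ((summable_nat_add_iff K).mpr hsum)
          have : Summable (fun i : ℕ => c₀ * Q ^ i) :=
            (summable_geometric_of_lt_one hQ0.le hQ1).mul_left _
          exact (summable_nat_add_iff K).mpr this
      _ = c₀ * Q ^ K * (1 - Q)⁻¹ := by
          have : ∀ i : ℕ, c₀ * Q ^ (i + K) = (c₀ * Q ^ K) * Q ^ i := by
            intro i
            rw [pow_add]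
            ring
          rw [tsum_congr this, tsum_mul_left, tsum_geometric_of_lt_one hQ0.le hQ1]
  have hQKv' : c₀ * Q ^ K * (1-Q)⁻¹ ≤ c₀ * v * (1-Q)⁻¹ := by
    have h1Q : (0:ℝ) < (1 - Q)⁻¹ := by
      rw [inv_pos]
      linarith
    apply mul_le_mul_of_nonneg_right _ h1Q.le
    exact mul_le_mul_of_nonneg_left hQKv hc
  calc ∑' k, tk' c₀ n ν A B k
      = ∑ i ∈ Finset.range K, tk' c₀ n ν A B i + ∑' i : ℕ, tk' c₀ n ν A B (i + K) :=
        hsplit.symm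
    _ ≤ (K:ℝ) * (c₀ * v) + c₀ * v * (1 - Q)⁻¹ := add_le_add hpart (htail.trans hQKv')
    _ ≤ (Real.log (A+B) + 1) * (c₀ * v) + c₀ * v * (1 - Q)⁻¹ := by
        apply add_le_add_left
        apply mul_le_mul_of_nonneg_right hKle (by positivity)
    _ ≤ c₀ * (1 + (1 - Q)⁻¹) * (v * (1 + Real.log (A + B))) := by
        have h1Q1 : (1:ℝ) ≤ (1 - Q)⁻¹ := by
          rw [le_inv_comm₀] <;> linarith
        have hcv : 0 ≤ c₀ * v := by positivity
        nlinarith [mul_nonneg hc hv0, mul_nonneg (mul_nonneg hc hv0) hlog0,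
          mul_le_mul_of_nonneg_left h1Q1 (mul_nonneg (mul_nonneg hc hv0) hlog0)]
    _ = c₀ * (1 + (1 - Q)⁻¹) * ((A + B) ^ (-ν / 2) * (1 + Real.log (A + B))) := by
        rw [hv_def]


lemma tk_eq_tk' (n : ℕ) (ν A B : ℝ) (k : ℕ) :
    tk n ν A B k = tk' (capC n * 2 ^ (n-1)) n ν A B k := by
  unfold tk tk'
  rw [mul_pow, ← pow_mul, Nat.mul_comm, pow_mul]
  ring

/-! ### the geometric identity -/

lemma key_id {n : ℕ} (x : EuclideanSpace ℝ (Fin n)) (ρ : ℝ)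
    (e : EuclideanSpace ℝ (Fin n)) (he : ‖e‖ = 1) (hxe : x = ‖x‖ • e)
    (θ : sphere (0 : EuclideanSpace ℝ (Fin n)) 1) :
    1 + ‖x - ρ • (θ : EuclideanSpace ℝ (Fin n))‖ ^ 2
      = (1 + (ρ - ‖x‖) ^ 2) + (ρ * ‖x‖) * ‖(θ : EuclideanSpace ℝ (Fin n)) - e‖ ^ 2 := by
  have hθ : ‖(θ : EuclideanSpace ℝ (Fin n))‖ = 1 := mem_sphere_zero_iff_norm.mp θ.2
  set r : ℝ := ‖x‖ with hr_def
  have h1 : ‖x - ρ • (θ : EuclideanSpace ℝ (Fin n))‖ ^ 2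
      = r ^ 2 - 2 * (ρ * (r * inner ℝ e (θ : EuclideanSpace ℝ (Fin n)))) + ρ ^ 2 := by
    rw [norm_sub_sq_real]
    have hn1 : ‖ρ • (θ : EuclideanSpace ℝ (Fin n))‖ ^ 2 = ρ ^ 2 := by
      rw [norm_smul, Real.norm_eq_abs, hθ, mul_one, sq_abs]
    have hn2 : (inner ℝ x (ρ • (θ : EuclideanSpace ℝ (Fin n))) : ℝ)
        = ρ * (r * inner ℝ e (θ : EuclideanSpace ℝ (Fin n))) := by
      rw [real_inner_smul_right]
      congr 1
      conv_lhs => rw [hxe]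
      rw [real_inner_smul_left]
    rw [hn1, hn2, ← hr_def]
  have h2 : ‖(θ : EuclideanSpace ℝ (Fin n)) - e‖ ^ 2
      = 2 - 2 * inner ℝ e (θ : EuclideanSpace ℝ (Fin n)) := by
    rw [norm_sub_sq_real, hθ, he, real_inner_comm]
    ring
  rw [h1, h2]
  ring

/-! ### main theorem -/

end JnuAux

open JnuAux in
/-- The global upper bounds for `J_ν` stated at the end of Lemma 2.2 of the paper. -/
theorem Jnu_upper_bounds (n : ℕ) (hn : 2 ≤ n) (ν : ℝ) (hν : 0 < ν) :
    ∃ C : ℝ, 0 < C ∧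
      (ν < (n : ℝ) - 1 →
        ∀ (x : EuclideanSpace ℝ (Fin n)) (ρ : ℝ), 0 ≤ ρ →
          Jnu n ν x ρ ≤ C * (1 + (ρ + ‖x‖) ^ 2) ^ (-ν / 2)) ∧
      (ν = (n : ℝ) - 1 →
        ∀ (x : EuclideanSpace ℝ (Fin n)) (ρ : ℝ), 0 ≤ ρ →
          Jnu n ν x ρ ≤ C * (1 + (ρ + ‖x‖) ^ 2) ^ (-ν / 2) *
            Real.log (2 * (1 + ρ ^ 2) ^ ((1 : ℝ) / 2) + ‖x‖)) := by
  classical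
  set c₀ : ℝ := capC n * 2 ^ (n-1) with hc₀_def
  have hc₀ : 0 ≤ c₀ := by
    have := capC_nonneg n
    positivity
  have hsummable : ∀ A B : ℝ, 1 ≤ A → 0 ≤ B → Summable (tk' c₀ n ν A B) := by
    intro A B hA hB
    have := summable_tk n hn ν A B hν hA hB
    exact (summable_congr fun k => (tk_eq_tk' n ν A B k)).mp this
  -- the master bound : for every x, ρ ≥ 0 the integral is at most the tsum
  have master : ∀ (x : EuclideanSpace ℝ (Fin n)) (ρ : ℝ), 0 ≤ ρ →
      Jnu n ν x ρ ≤ ∑' k, tk' c₀ n ν (1 + (ρ - ‖x‖)^2) (ρ * ‖x‖) k := by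
    intro x ρ hρ
    obtain ⟨e, he, hxe⟩ : ∃ e : EuclideanSpace ℝ (Fin n), ‖e‖ = 1 ∧ x = ‖x‖ • e := by
      by_cases hx : x = 0
      · refine ⟨EuclideanSpace.single ⟨0, by omega⟩ (1:ℝ), ?_, ?_⟩
        · simp [EuclideanSpace.norm_single]
        · simp [hx]
      · refine ⟨‖x‖⁻¹ • x, norm_smul_inv_norm hx, ?_⟩
        rw [smul_smul, mul_inv_cancel₀ (norm_ne_zero_iff.mpr hx), one_smul]
    have hA : (1:ℝ) ≤ 1 + (ρ - ‖x‖)^2 := by nlinarith [sq_nonneg (ρ - ‖x‖)]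
    have hB : (0:ℝ) ≤ ρ * ‖x‖ := mul_nonneg hρ (norm_nonneg x)
    have hJ : Jnu n ν x ρ = ∫ θ : sphere (0 : EuclideanSpace ℝ (Fin n)) 1,
        ((1 + (ρ - ‖x‖)^2) + (ρ * ‖x‖) * ‖(θ : EuclideanSpace ℝ (Fin n)) - e‖ ^ 2) ^ (-ν / 2)
          ∂(sphereMeasure n) := by
      unfold Jnu
      apply integral_congr_ae
      apply Filter.Eventually.of_forall
      intro θ
      exact congrArg (fun s : ℝ => s ^ (-ν / 2)) (key_id x ρ e he hxe θ)
    rw [hJ]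
    calc _ ≤ ∑' k, tk n ν (1 + (ρ - ‖x‖)^2) (ρ * ‖x‖) k :=
          integral_le_tsum n hn ν hν e he _ _ hA hB
      _ = _ := tsum_congr fun k => tk_eq_tk' n ν _ _ k
  -- comparison of (A+B) with 1 + (ρ + r)²
  have hABcomp : ∀ (r ρ : ℝ), 0 ≤ r → 0 ≤ ρ →
      ((1 + (ρ - r)^2) + ρ * r) ^ (-ν / 2)
        ≤ (4:ℝ) ^ (ν/2) * (1 + (ρ + r)^2) ^ (-ν / 2) := by
    intro r ρ hr hρ
    have h4 : (1 + (ρ + r)^2)/4 ≤ (1 + (ρ - r)^2) + ρ * r := by nlinarith [sq_nonneg (ρ - r)]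
    have hpos : (0:ℝ) < (1 + (ρ + r)^2)/4 := by positivity
    have step : ((1 + (ρ - r)^2) + ρ * r) ^ (-ν / 2) ≤ ((1 + (ρ + r)^2)/4) ^ (-ν / 2) :=
      Real.rpow_le_rpow_of_nonpos hpos h4 (by linarith)
    have e4 : ((1 + (ρ + r)^2)/4 : ℝ) ^ (-ν / 2)
        = (4:ℝ) ^ (ν/2) * (1 + (ρ + r)^2) ^ (-ν / 2) := by
      rw [Real.div_rpow (by positivity) (by norm_num)]
      rw [div_eq_mul_inv, ← Real.rpow_neg (by norm_num : (0:ℝ) ≤ 4)]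
      rw [show -(-ν/2) = ν/2 by ring]
      ring
    rw [e4] at step
    exact step
  rcases lt_trichotomy ν ((n:ℝ) - 1) with hlt | heq | hgt
  · obtain ⟨C1, hC1, hC1b⟩ := sum_lt c₀ hc₀ n hn ν hν hlt hsummable
    refine ⟨C1 * (4:ℝ)^(ν/2) + 1, by positivity, fun _ x ρ hρ => ?_, fun habs => ?_⟩
    swap
    · exact absurd habs hlt.ne
    have hA : (1:ℝ) ≤ 1 + (ρ - ‖x‖)^2 := by nlinarith [sq_nonneg (ρ - ‖x‖)]
    have hB : (0:ℝ) ≤ ρ * ‖x‖ := mul_nonneg hρ (norm_nonneg x)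
    have hw : (0:ℝ) ≤ (1 + (ρ + ‖x‖)^2) ^ (-ν / 2) := Real.rpow_nonneg (by positivity) _
    calc Jnu n ν x ρ ≤ ∑' k, tk' c₀ n ν (1 + (ρ - ‖x‖)^2) (ρ * ‖x‖) k := master x ρ hρ
      _ ≤ C1 * ((1 + (ρ - ‖x‖)^2) + ρ * ‖x‖) ^ (-ν / 2) := hC1b _ _ hA hB
      _ ≤ C1 * ((4:ℝ) ^ (ν/2) * (1 + (ρ + ‖x‖)^2) ^ (-ν / 2)) :=
          mul_le_mul_of_nonneg_left (hABcomp ‖x‖ ρ (norm_nonneg x) hρ) hC1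
      _ = (C1 * (4:ℝ)^(ν/2)) * (1 + (ρ + ‖x‖)^2) ^ (-ν / 2) := by ring
      _ ≤ (C1 * (4:ℝ)^(ν/2) + 1) * (1 + (ρ + ‖x‖)^2) ^ (-ν / 2) := by
          apply mul_le_mul_of_nonneg_right _ hw
          linarith
  · obtain ⟨C2, hC2, hC2b⟩ := sum_eq c₀ hc₀ n hn ν hν heq hsummable
    have hlog2pos : (0:ℝ) < Real.log 2 := Real.log_pos (by norm_num)
    refine ⟨C2 * (4:ℝ)^(ν/2) * (1/Real.log 2 + 2) + 1, by positivity, fun habs => ?_,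
      fun _ x ρ hρ => ?_⟩
    · exact absurd heq habs.ne
    set r : ℝ := ‖x‖ with hr_def
    have hr : 0 ≤ r := norm_nonneg x
    have hA : (1:ℝ) ≤ 1 + (ρ - r)^2 := by nlinarith [sq_nonneg (ρ - r)]
    have hB : (0:ℝ) ≤ ρ * r := mul_nonneg hρ hr
    have hAB1 : (1:ℝ) ≤ (1 + (ρ - r)^2) + ρ * r := by linarith
    have hAB0 : (0:ℝ) < (1 + (ρ - r)^2) + ρ * r := by linarith
    set L : ℝ := 2 * (1 + ρ^2) ^ ((1:ℝ)/2) + r with hL_def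
    have hs2 : ((1 + ρ^2) ^ ((1:ℝ)/2)) ^ 2 = 1 + ρ^2 := by
      rw [← Real.rpow_natCast ((1 + ρ^2) ^ ((1:ℝ)/2)) 2, ← Real.rpow_mul (by positivity)]
      norm_num
    have hs0 : (0:ℝ) ≤ (1 + ρ^2) ^ ((1:ℝ)/2) := Real.rpow_nonneg (by positivity) _
    have hsq1 : (1:ℝ) ≤ (1 + ρ^2) ^ ((1:ℝ)/2) := by nlinarith [hs2, hs0, sq_nonneg ρ]
    have hsqρ : ρ ≤ (1 + ρ^2) ^ ((1:ℝ)/2) := by nlinarith [hs2, hs0]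
    have hL2 : (2:ℝ) ≤ L := by
      rw [hL_def]
      linarith
    have hL0 : (0:ℝ) < L := by linarith
    have hABL : (1 + (ρ - r)^2) + ρ * r ≤ L ^ 2 := by
      rw [hL_def]
      nlinarith [hs2, hsqρ, hsq1, mul_nonneg hr (sub_nonneg.mpr hsqρ)]
    have hlogAB : Real.log ((1 + (ρ - r)^2) + ρ * r) ≤ 2 * Real.log L := by
      calc Real.log ((1 + (ρ - r)^2) + ρ * r) ≤ Real.log (L ^ 2) :=
            Real.log_le_log hAB0 hABL
        _ = 2 * Real.log L := by
            rw [Real.log_pow]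
            norm_num
    have hlog2L : Real.log 2 ≤ Real.log L := Real.log_le_log (by norm_num) hL2
    have hlogL0 : (0:ℝ) < Real.log L := lt_of_lt_of_le hlog2pos hlog2L
    have hlogAB0 : (0:ℝ) ≤ Real.log ((1 + (ρ - r)^2) + ρ * r) := Real.log_nonneg hAB1
    have hlogfac : 1 + Real.log ((1 + (ρ - r)^2) + ρ * r)
        ≤ (1/Real.log 2 + 2) * Real.log L := by
      have h1 : (1:ℝ) ≤ Real.log L / Real.log 2 := (one_le_div hlog2pos).mpr hlog2L
      have h2 : (1/Real.log 2 + 2) * Real.log L = Real.log L / Real.log 2 + 2 * Real.log L := by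
        field_simp
      rw [h2]
      linarith
    have hw : (0:ℝ) ≤ (1 + (ρ + r)^2) ^ (-ν / 2) := Real.rpow_nonneg (by positivity) _
    calc Jnu n ν x ρ ≤ ∑' k, tk' c₀ n ν (1 + (ρ - r)^2) (ρ * r) k := master x ρ hρ
      _ ≤ C2 * (((1 + (ρ - r)^2) + ρ * r) ^ (-ν / 2)
            * (1 + Real.log ((1 + (ρ - r)^2) + ρ * r))) := hC2b _ _ hA hB
      _ ≤ C2 * (((4:ℝ) ^ (ν/2) * (1 + (ρ + r)^2) ^ (-ν / 2))
            * ((1/Real.log 2 + 2) * Real.log L)) := by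
          apply mul_le_mul_of_nonneg_left _ hC2
          apply mul_le_mul (hABcomp r ρ hr hρ) hlogfac (by linarith)
          positivity
      _ = (C2 * (4:ℝ)^(ν/2) * (1/Real.log 2 + 2)) * (1 + (ρ + r)^2) ^ (-ν / 2)
            * Real.log L := by ring
      _ ≤ (C2 * (4:ℝ)^(ν/2) * (1/Real.log 2 + 2) + 1) * (1 + (ρ + r)^2) ^ (-ν / 2)
            * Real.log L := by
          apply mul_le_mul_of_nonneg_right _ hlogL0.le
          apply mul_le_mul_of_nonneg_right _ hw
          linarith
  · refine ⟨1, by norm_num, fun habs => ?_, fun habs => ?_⟩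
    · exact absurd habs (not_lt.mpr hgt.le)
    · exact absurd habs hgt.ne'
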